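/- Let P be prime and let F_P denote the P×P unitary DFT matrix with entries (F_P)_{v,b} = P^{-1/2}·exp(−2πi v b / P). Let R := P^{-D/2} ∑_{x,a,b} r((a·x − b)) |a,b⟩⟨x| be the discrete ridgelet transform matrix with r : ZMod P → ℂ, ∑_b r(b) = 0, ∑_b |r(b)|² = 1. Then R = (I ⊗ F_P^†) · Π · (F_P^{⊗D} ⊗ F_P^†) · (I ⊗ |r⟩-preparation), where Π is the permutation-like isometry mapping |a'⟩⊗|v⟩ ↦ |v^{-1}a' mod P⟩⊗|v⟩ for v ≠ 0; equivalently, for every f : (ZMod P)^D → ℂ with ∑_x f(x) = 0, applying this composition to ∑_x f(x)|x⟩ ⊗ ∑_b r(b)|b⟩ yields ∑_{a,b} R[f](a,b) |a,b⟩. -/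

import Mathlib

open Complex Finset

noncomputable section

/-- The character `exp(-2πi c / P)` via the canonical representative. -/
def ch {P : ℕ} (c : ZMod P) : ℂ :=
  Complex.exp (-2 * Real.pi * Complex.I * (c.val : ℂ) / (P : ℂ))

/-- The character `exp(2πi c / P)`. -/
def chI {P : ℕ} (c : ZMod P) : ℂ :=
  Complex.exp (2 * Real.pi * Complex.I * (c.val : ℂ) / (P : ℂ))

/-- Dot product in `ZMod P`. -/
def dotp {P D : ℕ} (a x : Fin D → ZMod P) : ZMod P := ∑ j, a j * x j

/-- `D`-dimensional discrete Fourier transform on `(ZMod P)^D`. -/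
def Fd {P D : ℕ} [NeZero P] (f : (Fin D → ZMod P) → ℂ) (u : Fin D → ZMod P) : ℂ :=
  (((P : ℝ) ^ (-(D : ℝ) / 2) : ℝ) : ℂ) * ∑ x : Fin D → ZMod P, f x * ch (dotp u x)

/-- 1-dimensional discrete Fourier transform on `ZMod P`. -/
def Fo {P : ℕ} [NeZero P] (h : ZMod P → ℂ) (v : ZMod P) : ℂ :=
  (((P : ℝ) ^ (-(1 : ℝ) / 2) : ℝ) : ℂ) * ∑ b : ZMod P, h b * ch (v * b)

/-- Inverse 1-dimensional discrete Fourier transform on `ZMod P`. -/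
def FoInv {P : ℕ} [NeZero P] (H : ZMod P → ℂ) (b : ZMod P) : ℂ :=
  (((P : ℝ) ^ (-(1 : ℝ) / 2) : ℝ) : ℂ) * ∑ v : ZMod P, H v * chI (v * b)

/-- Discrete ridgelet transform `R[f](a,b) = P^(-D/2) * ∑ f(x) r(a·x - b)`. -/
def Rt {P D : ℕ} [NeZero P] (f : (Fin D → ZMod P) → ℂ) (r : ZMod P → ℂ)
    (a : Fin D → ZMod P) (b : ZMod P) : ℂ :=
  (((P : ℝ) ^ (-(D : ℝ) / 2) : ℝ) : ℂ) * ∑ x : Fin D → ZMod P, f x * r (dotp a x - b)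

/-- Discretized shallow neural network `S[w](x)`. -/
def Snn {P D : ℕ} [NeZero P] (g : ZMod P → ℂ) (w : (Fin D → ZMod P) → ZMod P → ℂ)
    (x : Fin D → ZMod P) : ℂ :=
  (((P : ℝ) ^ (-(D : ℝ) / 2) : ℝ) : ℂ) *
    ∑ a : Fin D → ZMod P, ∑ b : ZMod P, w a b * g (dotp a x - b)

/-- Step 2 of the QRT circuit: forward QFT on the first register and inverse QFT
on the second register. -/
def step2 {P D : ℕ} [NeZero P] (ψ : (Fin D → ZMod P) × ZMod P → ℂ) :
    (Fin D → ZMod P) × ZMod P → ℂ :=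
  fun p => (((P : ℝ) ^ (-(D : ℝ) / 2) : ℝ) : ℂ) * (((P : ℝ) ^ (-(1 : ℝ) / 2) : ℝ) : ℂ) *
    ∑ x : Fin D → ZMod P, ∑ b : ZMod P, ψ (x, b) * ch (dotp p.1 x) * chI (p.2 * b)

/-- Step 3 of the QRT circuit: the controlled modular-inverse relabeling
mapping basis state (a', v) to (v⁻¹ a', v) for v ≠ 0. -/
def permOp {P D : ℕ} (ψ : (Fin D → ZMod P) × ZMod P → ℂ) :
    (Fin D → ZMod P) × ZMod P → ℂ :=
  fun p => if p.2 = 0 then ψ p else ψ (fun j => p.2 * p.1 j, p.2)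

/-- Step 4 of the QRT circuit: inverse QFT on the second register. -/
def step4 {P D : ℕ} [NeZero P] (ψ : (Fin D → ZMod P) × ZMod P → ℂ) :
    (Fin D → ZMod P) × ZMod P → ℂ :=
  fun p => (((P : ℝ) ^ (-(1 : ℝ) / 2) : ℝ) : ℂ) * ∑ v : ZMod P, ψ (p.1, v) * chI (v * p.2)

set_option linter.unusedSectionVars false
set_option maxHeartbeats 1000000

namespace QRTaux
variable {P : ℕ} [Fact (Nat.Prime P)]

lemma PneC : (P : ℂ) ≠ 0 := Nat.cast_ne_zero.mpr (NeZero.ne P)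

def E (P : ℕ) (n : ℤ) : ℂ := Complex.exp (2 * Real.pi * Complex.I * (n : ℂ) / (P : ℂ))

lemma E_add (m n : ℤ) : E P (m + n) = E P m * E P n := by
  unfold E; rw [← Complex.exp_add]; congr 1; push_cast; ring

lemma E_mul_P (k : ℤ) : E P ((P : ℤ) * k) = 1 := by
  unfold E
  have h : 2 * (Real.pi : ℂ) * Complex.I * (((P : ℤ) * k : ℤ) : ℂ) / (P : ℂ)
      = (k : ℂ) * (2 * (Real.pi : ℂ) * Complex.I) := by
    have := PneC (P := P); push_cast; field_simp
  rw [h, Complex.exp_int_mul_two_pi_mul_I]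

lemma E_congr {m n : ℤ} (h : (m : ZMod P) = (n : ZMod P)) : E P m = E P n := by
  obtain ⟨k, hk⟩ := ((ZMod.intCast_eq_intCast_iff m n P).mp h).dvd
  have hn : n = m + (P : ℤ) * k := by linarith [hk]
  rw [hn, E_add, E_mul_P, mul_one]

lemma chI_eq (t : ZMod P) : chI t = E P (t.val : ℤ) := by
  unfold chI E; norm_cast

lemma ch_eq (t : ZMod P) : ch t = E P (-(t.val : ℤ)) := by
  unfold ch E; congr 1; push_cast; ring

lemma E_zero : E P 0 = 1 := by simp [E]

lemma E_pow (k n : ℕ) : E P ((k * n : ℕ) : ℤ) = (E P n) ^ k := by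
  unfold E
  rw [← Complex.exp_nat_mul]
  congr 1; push_cast; ring

lemma term_eq (v s b c : ZMod P) :
    ch (v * s) * chI (v * b) * chI (v * c) = E P (((v * (b + c - s)).val : ℤ)) := by
  rw [ch_eq, chI_eq, chI_eq, ← E_add, ← E_add]
  apply E_congr
  push_cast [ZMod.natCast_val, ZMod.cast_id]
  ring

lemma sum_pow_val (x : ℂ) : ∑ v : ZMod P, x ^ v.val = ∑ i ∈ Finset.range P, x ^ i := by
  apply Finset.sum_nbij' (i := fun v : ZMod P => v.val) (j := fun i : ℕ => (i : ZMod P))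
  · intro v _; exact Finset.mem_range.mpr (ZMod.val_lt v)
  · intro i _; exact Finset.mem_univ _
  · intro v _; simp [ZMod.natCast_val, ZMod.cast_id]
  · intro i hi; exact ZMod.val_cast_of_lt (Finset.mem_range.mp hi)
  · intro v _; rfl

lemma E_ne_one {t : ZMod P} (ht : t ≠ 0) : E P (t.val : ℤ) ≠ 1 := by
  have hP : P ≠ 0 := NeZero.ne P
  have hprim := Complex.isPrimitiveRoot_exp P hP
  have hx : E P (t.val : ℤ) = Complex.exp (2 * Real.pi * Complex.I / P) ^ t.val := by
    rw [← Complex.exp_nat_mul]; unfold E; congr 1; push_cast; ring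
  rw [hx, Ne, hprim.pow_eq_one_iff_dvd]
  intro hdvd
  have h1 : t.val ≠ 0 := fun h => ht (by rwa [ZMod.val_eq_zero] at h)
  exact absurd (Nat.le_of_dvd (Nat.pos_of_ne_zero h1) hdvd) (not_le.mpr (ZMod.val_lt t))

lemma E_pow_P (t : ZMod P) : E P (t.val : ℤ) ^ P = 1 := by
  rw [← E_pow P t.val]
  have h : ((P * t.val : ℕ) : ℤ) = (P : ℤ) * (t.val : ℤ) := by push_cast; ring
  rw [h, E_mul_P]

lemma sum_ee (t : ZMod P) :
    ∑ v : ZMod P, E P (((v * t).val : ℤ)) = if t = 0 then (P : ℂ) else 0 := by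
  by_cases ht : t = 0
  · subst ht
    simp only [mul_zero, ZMod.val_zero, Nat.cast_zero, E_zero, if_pos rfl]
    simp [Finset.card_univ]
  · rw [if_neg ht]
    have hterm : ∀ v : ZMod P, E P (((v * t).val : ℤ)) = (E P (t.val : ℤ)) ^ v.val := by
      intro v
      rw [← E_pow v.val t.val]
      apply E_congr
      push_cast [ZMod.natCast_val, ZMod.cast_id]
      ring
    rw [Finset.sum_congr rfl fun v _ => hterm v, sum_pow_val,
      geom_sum_eq (E_ne_one ht), E_pow_P, sub_self, zero_div]

end QRTaux

/-- Correctness of the quantum ridgelet transform circuit: the composition of QFTs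
and the controlled modular-inverse arithmetic implements the ridgelet isometry on
mean-zero inputs. -/
theorem qrt_circuit_correct (P D : ℕ) [Fact (Nat.Prime P)]
    (r : ZMod P → ℂ) (hr0 : ∑ b : ZMod P, r b = 0)
    (hr1 : ∑ b : ZMod P, ‖r b‖ ^ 2 = 1)
    (f : (Fin D → ZMod P) → ℂ) (hf : ∑ x : Fin D → ZMod P, f x = 0) :
    step4 (permOp (step2 (fun p : (Fin D → ZMod P) × ZMod P => f p.1 * r p.2)))
      = fun p => Rt f r p.1 p.2 := by
  classical
  funext p
  obtain ⟨a, c⟩ := p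
  set ψ : (Fin D → ZMod P) × ZMod P → ℂ := fun q => f q.1 * r q.2 with hψ
  set cD : ℂ := (((P : ℝ) ^ (-(D : ℝ) / 2) : ℝ) : ℂ) with hcD
  set c1 : ℂ := (((P : ℝ) ^ (-(1 : ℝ) / 2) : ℝ) : ℂ) with hc1
  -- the state after step 2 applied at v = 0 vanishes by mean-zero of r
  have hzero : ∀ a' : Fin D → ZMod P, step2 ψ (a', 0) = 0 := by
    intro a'
    unfold step2
    have hinner : ∀ x : Fin D → ZMod P,
        ∑ b : ZMod P, ψ (x, b) * ch (dotp a' x) * chI ((0 : ZMod P) * b) = 0 := by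
      intro x
      have h1 : ∀ b : ZMod P, ψ (x, b) * ch (dotp a' x) * chI ((0 : ZMod P) * b)
          = (f x * ch (dotp a' x)) * r b := by
        intro b
        have hchI : chI ((0 : ZMod P) * b) = 1 := by
          simp [chI, zero_mul, ZMod.val_zero]
        rw [hchI, hψ]; ring
      rw [Finset.sum_congr rfl fun b _ => h1 b, ← Finset.mul_sum, hr0, mul_zero]
    simp only [hinner, Finset.sum_const_zero, mul_zero]
  have hperm : ∀ v : ZMod P,
      permOp (step2 ψ) (a, v) = step2 ψ (fun j => v * a j, v) := by
    intro v
    by_cases hv : v = 0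
    · subst hv
      show (if (0 : ZMod P) = 0 then step2 ψ (a, 0) else _) = _
      rw [if_pos rfl, hzero, hzero]
    · simp [permOp, hv]
  have hdotp : ∀ (v : ZMod P) (x : Fin D → ZMod P),
      dotp (fun j => v * a j) x = v * dotp a x := by
    intro v x; simp [dotp, Finset.mul_sum, mul_assoc]
  have h1 : ∀ v : ZMod P,
      permOp (step2 ψ) (a, v) * chI (v * c)
        = cD * c1 * ∑ x : Fin D → ZMod P, ∑ b : ZMod P,
            f x * r b * QRTaux.E P (((v * (b + c - dotp a x)).val : ℤ)) := by
    intro v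
    rw [hperm v]
    unfold step2
    rw [mul_assoc (cD * c1)]
    congr 1
    rw [Finset.sum_mul]
    refine Finset.sum_congr rfl fun x _ => ?_
    rw [Finset.sum_mul]
    refine Finset.sum_congr rfl fun b _ => ?_
    rw [hdotp]
    calc ψ (x, b) * ch (v * dotp a x) * chI (v * b) * chI (v * c)
        = f x * r b * (ch (v * dotp a x) * chI (v * b) * chI (v * c)) := by
          simp only [hψ]; ring
      _ = f x * r b * QRTaux.E P (((v * (b + c - dotp a x)).val : ℤ)) := by
          rw [QRTaux.term_eq]
  show step4 (permOp (step2 ψ)) (a, c) = Rt f r a c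
  unfold step4
  simp only []
  rw [Finset.sum_congr rfl fun v _ => h1 v, ← Finset.mul_sum]
  have hswap : (∑ v : ZMod P, ∑ x : Fin D → ZMod P, ∑ b : ZMod P,
        f x * r b * QRTaux.E P (((v * (b + c - dotp a x)).val : ℤ)))
      = ∑ x : Fin D → ZMod P, ∑ b : ZMod P, f x * r b *
          ∑ v : ZMod P, QRTaux.E P (((v * (b + c - dotp a x)).val : ℤ)) := by
    rw [Finset.sum_comm]
    refine Finset.sum_congr rfl fun x _ => ?_
    rw [Finset.sum_comm]
    refine Finset.sum_congr rfl fun b _ => ?_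
    rw [← Finset.mul_sum]
  rw [hswap]
  have hbsum : ∀ x : Fin D → ZMod P,
      (∑ b : ZMod P, f x * r b *
        ∑ v : ZMod P, QRTaux.E P (((v * (b + c - dotp a x)).val : ℤ)))
      = f x * r (dotp a x - c) * (P : ℂ) := by
    intro x
    have hsplit : ∀ b : ZMod P,
        f x * r b * (∑ v : ZMod P, QRTaux.E P (((v * (b + c - dotp a x)).val : ℤ)))
          = if b = dotp a x - c then f x * r b * (P : ℂ) else 0 := by
      intro b
      rw [QRTaux.sum_ee]
      by_cases hbb : b = dotp a x - c
      · rw [if_pos hbb, if_pos (by rw [hbb]; ring)]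
      · rw [if_neg (fun h => hbb (by linear_combination h)), if_neg hbb, mul_zero]
    rw [Finset.sum_congr rfl fun b _ => hsplit b,
      Finset.sum_ite_eq' Finset.univ (dotp a x - c) (fun b => f x * r b * (P : ℂ))]
    simp
  rw [Finset.sum_congr rfl fun x _ => hbsum x]
  have hp : (0 : ℝ) < (P : ℝ) :=
    Nat.cast_pos.mpr (Fact.out (p := Nat.Prime P)).pos
  have hR : ((P : ℝ) ^ (-(1 : ℝ) / 2)) * ((P : ℝ) ^ (-(1 : ℝ) / 2)) * (P : ℝ) = 1 := by
    rw [← Real.rpow_add hp]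
    have h2 : (-(1 : ℝ) / 2 + -(1 : ℝ) / 2) = (-1 : ℝ) := by norm_num
    rw [h2, Real.rpow_neg_one]
    exact inv_mul_cancel₀ (ne_of_gt hp)
  have hconst : c1 * c1 * (P : ℂ) = 1 := by
    calc c1 * c1 * (P : ℂ)
        = (((((P : ℝ) ^ (-(1 : ℝ) / 2)) * ((P : ℝ) ^ (-(1 : ℝ) / 2)) * (P : ℝ)) : ℝ) : ℂ) := by
          rw [hc1]; push_cast; ring
      _ = 1 := by rw [hR]; norm_num
  unfold Rt
  calc c1 * (cD * c1 * ∑ x : Fin D → ZMod P, f x * r (dotp a x - c) * (P : ℂ))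
      = (c1 * c1 * (P : ℂ)) * (cD * ∑ x : Fin D → ZMod P, f x * r (dotp a x - c)) := by
        rw [← Finset.sum_mul]
        ring
    _ = cD * ∑ x : Fin D → ZMod P, f x * r (dotp a x - c) := by rw [hconst, one_mul]
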